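/- Let q ∈ (1/2, 1) and define g : (0, 1/2] → ℝ by g(x) = (1−4q)x² + 2qx. Then (2q−1)/(4q−1) is a global attracting fixed point of g on (0, 1/2]: for every x ∈ (0, 1/2], the sequence of iterates (g^n(x))_{n≥1} converges to (2q−1)/(4q−1). -/
import Mathlib


open Filter Topology

/-- The quadratic map g(x) = (1 − 4q) x² + 2q x. -/
noncomputable def g (q : ℝ) (x : ℝ) : ℝ := (1 - 4 * q) * x ^ 2 + 2 * q * x

set_option maxHeartbeats 1000000 in
/-- For q ∈ (1/2, 1), the point (2q−1)/(4q−1) is a global attracting fixed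
point of g on (0, 1/2]: it is a fixed point and for every x ∈ (0, 1/2] the
iterates g^n(x) converge to it. -/
theorem g_global_attractor (q : ℝ) (hq1 : 1 / 2 < q) (hq2 : q < 1) (x : ℝ)
    (hx : x ∈ Set.Ioc (0 : ℝ) (1 / 2)) :
    g q ((2 * q - 1) / (4 * q - 1)) = (2 * q - 1) / (4 * q - 1) ∧
    Tendsto (fun n => (g q)^[n] x) atTop (𝓝 ((2 * q - 1) / (4 * q - 1))) := by
  obtain ⟨hx0, hx2⟩ := hx
  have h4 : (0:ℝ) < 4 * q - 1 := by linarith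
  have h4' : (4:ℝ) * q - 1 ≠ 0 := ne_of_gt h4
  set p : ℝ := (2 * q - 1) / (4 * q - 1) with hp
  set r : ℝ := 1 / (4 * q - 1) with hr
  have hp0 : 0 < p := div_pos (by linarith) h4
  have hp2 : p < 1 / 2 := by
    rw [hp, div_lt_div_iff₀ h4 (by norm_num)]; linarith
  have hr3 : 1 / 3 < r := by
    rw [hr, div_lt_div_iff₀ (by norm_num) h4]; linarith
  have key : ∀ y : ℝ, g q y - p = (1 - 4 * q) * (y - p) * (y - r) := by
    intro y
    unfold g
    rw [hp, hr]
    field_simp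
    ring
  have hfix : g q p = p := by
    have := key p
    simp at this
    linarith [this]
  refine ⟨hfix, ?_⟩
  -- invariant interval
  set m : ℝ := min x (min p (1/4)) with hm
  have hm0 : 0 < m := lt_min hx0 (lt_min hp0 (by norm_num))
  have hmx : m ≤ x := min_le_left _ _
  have hmp : m ≤ p := le_trans (min_le_right _ _) (min_le_left _ _)
  have hm4 : m ≤ 1/4 := le_trans (min_le_right _ _) (min_le_right _ _)
  -- contraction constant
  set c : ℝ := max (1 - (4 * q - 1) * m) (1/2) with hc
  have hc0 : 0 ≤ c := le_trans (by norm_num) (le_max_right _ _)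
  have hc1 : c < 1 := by
    apply max_lt
    · nlinarith
    · norm_num
  -- invariance of [m, 1/2]
  have hinv : ∀ y : ℝ, m ≤ y → y ≤ 1/2 → m ≤ g q y ∧ g q y ≤ 1/2 := by
    intro y hy1 hy2
    constructor
    · rcases le_or_gt y p with h | h
      · -- g y ≥ y ≥ m
        have : g q y - y = y * ((1 - 4*q) * y + (2*q - 1)) := by unfold g; ring
        have h1 : (1 - 4*q) * y + (2*q - 1) ≥ 0 := by
          have : (1 - 4*q) * y ≥ (1 - 4*q) * p := by
            apply mul_le_mul_of_nonpos_left h (by linarith)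
          have hpe : (1 - 4*q) * p = -(2*q - 1) := by
            rw [hp]; field_simp; ring
          linarith [this, hpe ▸ this]
        nlinarith [hm0, hy1]
      · rcases le_or_gt y r with h2 | h2
        · -- p < y ≤ r : g y ≥ p ≥ m
          have hk := key y
          nlinarith [hk, mul_nonneg (mul_nonneg (le_of_lt h4)
            (by linarith : (0:ℝ) ≤ y - p)) (by linarith : (0:ℝ) ≤ r - y)]
        · -- y > r : g y ≥ 1/4 ≥ m
          have h3 : g q y - 1/4 = (y - 1/2) * ((1 - 4*q) * y + 1/2) := by
            unfold g; ring
          have hry : (4*q - 1) * y > 1 := by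
            have := (div_lt_iff₀ h4).mp h2
            linarith
          nlinarith [h3]
    · -- g y ≤ 1/2
      have hq' : 2 * q^2 - 4 * q + 1 < 0 := by
        nlinarith [mul_pos (show (0:ℝ) < q - 1/2 by linarith)
          (show (0:ℝ) < 1 - q by linarith)]
      have hid : (4*q - 1) * (1/2 - g q y) = ((4*q-1) * y - q)^2 + ((4*q-1)/2 - q^2) := by
        unfold g; ring
      have h5 : 0 ≤ (4*q - 1) * (1/2 - g q y) := by
        have hs := sq_nonneg ((4*q-1) * y - q)
        linarith [hid]
      have h6 : 0 ≤ 1/2 - g q y := by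
        by_contra hcon
        push_neg at hcon
        nlinarith [mul_pos h4 (by linarith : (0:ℝ) < g q y - 1/2)]
      linarith
  -- contraction estimate
  have hcontr : ∀ y : ℝ, m ≤ y → y ≤ 1/2 → |g q y - p| ≤ c * |y - p| := by
    intro y hy1 hy2
    rw [key y]
    have : |(1 - 4*q) * (y - p) * (y - r)| = ((4*q-1) * |y - r|) * |y - p| := by
      rw [abs_mul, abs_mul, abs_of_nonpos (by linarith : (1:ℝ) - 4*q ≤ 0)]
      ring
    rw [this]
    apply mul_le_mul_of_nonneg_right _ (abs_nonneg _)
    rcases le_or_gt y r with h | h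
    · rw [abs_of_nonpos (by linarith)]
      have h7 : (4*q-1) * (-(y - r)) ≤ (4*q-1) * (r - m) :=
        mul_le_mul_of_nonneg_left (by linarith) (le_of_lt h4)
      have hre : (4*q-1) * (r - m) = 1 - (4*q-1)*m := by
        rw [hr]; field_simp; try ring
      calc (4*q-1) * -(y - r) ≤ 1 - (4*q-1)*m := by linarith
        _ ≤ c := le_max_left _ _
    · rw [abs_of_pos (by linarith)]
      have h7 : (4*q-1) * (y - r) ≤ (4*q-1) * (1/2 - r) :=
        mul_le_mul_of_nonneg_left (by linarith) (le_of_lt h4)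
      have hre : (4*q-1) * (1/2 - r) = (4*q-1)/2 - 1 := by
        rw [hr]; field_simp; try ring
      calc (4*q-1) * (y - r) ≤ (4*q-1)/2 - 1 := by linarith
        _ ≤ 1/2 := by linarith
        _ ≤ c := le_max_right _ _
  -- induction
  have hiter : ∀ n : ℕ, (m ≤ (g q)^[n] x ∧ (g q)^[n] x ≤ 1/2) ∧
      |(g q)^[n] x - p| ≤ c^n * |x - p| := by
    intro n
    induction n with
    | zero => exact ⟨⟨hmx, hx2⟩, by simp⟩
    | succ n ih =>
      obtain ⟨⟨h1, h2⟩, h3⟩ := ih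
      rw [Function.iterate_succ_apply']
      refine ⟨hinv _ h1 h2, ?_⟩
      calc |g q ((g q)^[n] x) - p| ≤ c * |(g q)^[n] x - p| := hcontr _ h1 h2
        _ ≤ c * (c^n * |x - p|) := by
            apply mul_le_mul_of_nonneg_left h3 hc0
        _ = c^(n+1) * |x - p| := by ring
  -- conclude
  rw [tendsto_iff_dist_tendsto_zero]
  have hbound : Tendsto (fun n : ℕ => c^n * |x - p|) atTop (𝓝 0) := by
    have := tendsto_pow_atTop_nhds_zero_of_lt_one hc0 hc1
    simpa using this.mul_const |x - p|
  apply squeeze_zero (fun n => dist_nonneg) _ hbound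
  intro n
  rw [Real.dist_eq]
  exact (hiter n).2
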